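/- Let ψ: M^n → ℝ^d be an isometric immersion and q a positive integer with q < n/2. Then the q-th Lovelock tensor of the induced metric g = ψ*δ̄ is proportional to the 2q-th Newton transformation of the immersion: G_{(q)} = −((2q)!/2) T_{(2q)}. -/

import Mathlib

open scoped BigOperators RealInnerProductSpace

/-- Generalized Kronecker delta `δ^{a_1…a_k}_{b_1…b_k}`. -/
noncomputable def gkd {n k : ℕ} (a b : Fin k → Fin n) : ℝ :=
  Matrix.det (Matrix.of fun i j => if a i = b j then (1 : ℝ) else 0)

/-- First member of the `s`-th index pair. -/
def pr1 {q : ℕ} (s : Fin q) : Fin (2 * q) := ⟨2 * s.1, by have := s.2; omega⟩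

/-- Second member of the `s`-th index pair. -/
def pr2 {q : ℕ} (s : Fin q) : Fin (2 * q) := ⟨2 * s.1 + 1, by have := s.2; omega⟩

namespace LovelockAux

variable {q n : ℕ}

def pairIdx (i : Fin (2 * q)) : Fin q := ⟨i.1 / 2, by have := i.2; omega⟩

def partner (i : Fin (2 * q)) : Fin (2 * q) :=
  ⟨if i.1 % 2 = 0 then i.1 + 1 else i.1 - 1, by have := i.2; split <;> omega⟩

lemma pairIdx_pr1 (s : Fin q) : pairIdx (pr1 s) = s := by
  apply Fin.ext; show 2 * s.1 / 2 = s.1; omega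

lemma pairIdx_pr2 (s : Fin q) : pairIdx (pr2 s) = s := by
  apply Fin.ext; show (2 * s.1 + 1) / 2 = s.1; omega

lemma partner_pr1 (s : Fin q) : partner (pr1 s) = pr2 s := by
  simp only [partner, pr1, pr2, Fin.mk.injEq]; exact (if_pos (by omega)).trans (by omega)

lemma partner_pr2 (s : Fin q) : partner (pr2 s) = pr1 s := by
  simp only [partner, pr1, pr2, Fin.mk.injEq]; exact (if_neg (by omega)).trans (by omega)

lemma pr1_ne_pr2 (s : Fin q) : pr1 s ≠ pr2 s := by
  simp [pr1, pr2, Fin.ext_iff]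

lemma pairIdx_partner (i : Fin (2 * q)) : pairIdx (partner i) = pairIdx i := by
  simp only [pairIdx, partner, Fin.mk.injEq]; split <;> omega

lemma partner_invol : Function.Involutive (partner (q := q)) := by
  intro i
  apply Fin.ext
  simp only [partner]
  split <;> split <;> omega

lemma eq_pr_of_pairIdx {i : Fin (2 * q)} {s : Fin q} (h : pairIdx i = s) :
    i = pr1 s ∨ i = pr2 s := by
  have h2 := i.2
  simp only [pairIdx, Fin.ext_iff] at h
  simp only [pr1, pr2, Fin.ext_iff]
  omega

def sigf (t : Finset (Fin q)) (i : Fin (2 * q)) : Fin (2 * q) :=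
  if pairIdx i ∈ t then partner i else i

lemma sigf_invol (t : Finset (Fin q)) : Function.Involutive (sigf t) := by
  intro i
  unfold sigf
  by_cases h : pairIdx i ∈ t
  · simp [h, pairIdx_partner, partner_invol i]
  · simp [h]

lemma sigf_pr1 (t : Finset (Fin q)) (s : Fin q) :
    sigf t (pr1 s) = if s ∈ t then pr2 s else pr1 s := by
  simp [sigf, pairIdx_pr1, partner_pr1]

lemma sigf_pr2 (t : Finset (Fin q)) (s : Fin q) :
    sigf t (pr2 s) = if s ∈ t then pr1 s else pr2 s := by
  simp [sigf, pairIdx_pr2, partner_pr2]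

def sigf' (t : Finset (Fin q)) : Fin (2 * q + 1) → Fin (2 * q + 1) :=
  Fin.cases 0 (fun i => (sigf t i).succ)

@[simp] lemma sigf'_zero (t : Finset (Fin q)) : sigf' t 0 = 0 := rfl

@[simp] lemma sigf'_succ (t : Finset (Fin q)) (i : Fin (2 * q)) :
    sigf' t i.succ = (sigf t i).succ := by
  simp [sigf']

lemma sigf'_invol (t : Finset (Fin q)) : Function.Involutive (sigf' t) := by
  intro i
  induction i using Fin.cases with
  | zero => simp
  | succ i => simp [sigf_invol t i]

def sigP (t : Finset (Fin q)) : Equiv.Perm (Fin (2 * q + 1)) :=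
  Function.Involutive.toPerm _ (sigf'_invol t)

@[simp] lemma sigP_apply (t : Finset (Fin q)) (i : Fin (2 * q + 1)) :
    sigP t i = sigf' t i := rfl

lemma sigP_empty : sigP (∅ : Finset (Fin q)) = 1 := by
  ext i
  induction i using Fin.cases with
  | zero => simp
  | succ i => simp [sigf]

lemma sigP_insert (t : Finset (Fin q)) (s : Fin q) (hs : s ∉ t) :
    sigP (insert s t) = Equiv.swap (pr1 s).succ (pr2 s).succ * sigP t := by
  apply Equiv.ext
  intro i
  show sigf' (insert s t) i = Equiv.swap (pr1 s).succ (pr2 s).succ (sigf' t i)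
  induction i using Fin.cases with
  | zero =>
      rw [sigf'_zero, sigf'_zero, Equiv.swap_apply_of_ne_of_ne (Fin.succ_ne_zero _).symm
        (Fin.succ_ne_zero _).symm]
  | succ i =>
      rw [sigf'_succ, sigf'_succ]
      by_cases h : pairIdx i = s
      · rcases eq_pr_of_pairIdx h with rfl | rfl
        · rw [sigf_pr1, sigf_pr1, if_pos (Finset.mem_insert_self s t), if_neg hs,
            Equiv.swap_apply_left]
        · rw [sigf_pr2, sigf_pr2, if_pos (Finset.mem_insert_self s t), if_neg hs,
            Equiv.swap_apply_right]
      · have hmem : pairIdx i ∈ insert s t ↔ pairIdx i ∈ t := by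
          simp [Finset.mem_insert, h]
        have hne1 : sigf t i ≠ pr1 s := by
          intro hc
          apply h
          rw [← pairIdx_pr1 s, ← hc]
          unfold sigf
          split
          · rw [pairIdx_partner]
          · rfl
        have hne2 : sigf t i ≠ pr2 s := by
          intro hc
          apply h
          rw [← pairIdx_pr2 s, ← hc]
          unfold sigf
          split
          · rw [pairIdx_partner]
          · rfl
        rw [Equiv.swap_apply_of_ne_of_ne (by simpa [Fin.succ_inj] using hne1)
          (by simpa [Fin.succ_inj] using hne2)]
        unfold sigf
        rw [if_congr hmem rfl rfl]

lemma sign_sigP (t : Finset (Fin q)) :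
    Equiv.Perm.sign (sigP t) = (-1 : ℤˣ) ^ t.card := by
  induction t using Finset.induction_on with
  | empty => simp [sigP_empty]
  | insert s t hs ih =>
      rw [sigP_insert t s hs, map_mul, ih, Equiv.Perm.sign_swap
        (by simpa [Fin.succ_inj] using pr1_ne_pr2 s), Finset.card_insert_of_notMem hs,
        pow_succ]
      exact mul_comm _ _

lemma cons_comp (t : Finset (Fin q)) (j : Fin n) (a : Fin (2 * q) → Fin n) :
    (Fin.cons j a : Fin (2 * q + 1) → Fin n) ∘ (sigP t) =
      Fin.cons j (fun i => a (sigf t i)) := by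
  funext i
  induction i using Fin.cases with
  | zero => simp
  | succ i => simp

lemma gkd_perm {n m : ℕ} (A B : Fin m → Fin n) (ρ : Equiv.Perm (Fin m)) :
    gkd A (B ∘ ρ) = ((Equiv.Perm.sign ρ : ℤ) : ℝ) * gkd A B := by
  unfold gkd
  have h : (Matrix.of fun i j => if A i = (B ∘ ρ) j then (1 : ℝ) else 0)
      = (Matrix.of fun i j => if A i = B j then (1 : ℝ) else 0).submatrix id ρ := rfl
  rw [h, Matrix.det_permute']



lemma key {q n : ℕ} (D : (Fin (2 * q) → Fin n) → ℝ) (x : Fin q → Fin n → Fin n → ℝ)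
    (hD : ∀ (t : Finset (Fin q)) (a : Fin (2 * q) → Fin n),
      D (fun i => a (sigf t i)) = (-1 : ℝ) ^ t.card * D a) :
    ∑ a : Fin (2 * q) → Fin n,
        D a * ∏ s : Fin q, (x s (a (pr1 s)) (a (pr2 s)) - x s (a (pr2 s)) (a (pr1 s)))
      = 2 ^ q * ∑ a : Fin (2 * q) → Fin n, D a * ∏ s : Fin q, x s (a (pr1 s)) (a (pr2 s)) := by
  classical
  calc
    ∑ a : Fin (2 * q) → Fin n,
        D a * ∏ s : Fin q, (x s (a (pr1 s)) (a (pr2 s)) - x s (a (pr2 s)) (a (pr1 s)))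
      = ∑ a : Fin (2 * q) → Fin n, ∑ t ∈ (Finset.univ : Finset (Fin q)).powerset,
          D a * ((∏ s ∈ t, x s (a (pr1 s)) (a (pr2 s))) *
            ∏ s ∈ Finset.univ \ t, -(x s (a (pr2 s)) (a (pr1 s)))) := by
        refine Finset.sum_congr rfl fun a _ => ?_
        simp only [sub_eq_add_neg]
        rw [Finset.prod_add, Finset.mul_sum]
    _ = ∑ t ∈ (Finset.univ : Finset (Fin q)).powerset, ∑ a : Fin (2 * q) → Fin n,
          D a * ((∏ s ∈ t, x s (a (pr1 s)) (a (pr2 s))) *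
            ∏ s ∈ Finset.univ \ t, -(x s (a (pr2 s)) (a (pr1 s)))) := Finset.sum_comm
    _ = ∑ t ∈ (Finset.univ : Finset (Fin q)).powerset,
          ∑ a : Fin (2 * q) → Fin n, D a * ∏ s : Fin q, x s (a (pr1 s)) (a (pr2 s)) := by
        refine Finset.sum_congr rfl fun t _ => ?_
        have hinv : Function.Involutive
            (fun (a : Fin (2 * q) → Fin n) => fun i => a (sigf (Finset.univ \ t) i)) := by
          intro a
          funext i
          simp [sigf_invol (Finset.univ \ t) i]
        refine (Fintype.sum_equiv (Function.Involutive.toPerm _ hinv) _ _ fun a => ?_).symm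
        have h1 : ∀ s ∈ t, (a (sigf (Finset.univ \ t) (pr1 s))) = a (pr1 s) := by
          intro s hs
          rw [sigf_pr1, if_neg (by simp [hs])]
        have h2 : ∀ s ∈ t, (a (sigf (Finset.univ \ t) (pr2 s))) = a (pr2 s) := by
          intro s hs
          rw [sigf_pr2, if_neg (by simp [hs])]
        have h1' : ∀ s ∈ Finset.univ \ t, (a (sigf (Finset.univ \ t) (pr1 s))) = a (pr2 s) := by
          intro s hs
          rw [sigf_pr1, if_pos hs]
        have h2' : ∀ s ∈ Finset.univ \ t, (a (sigf (Finset.univ \ t) (pr2 s))) = a (pr1 s) := by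
          intro s hs
          rw [sigf_pr2, if_pos hs]
        show D a * ∏ s : Fin q, x s (a (pr1 s)) (a (pr2 s))
            = D (fun i => a (sigf (Finset.univ \ t) i)) *
              ((∏ s ∈ t, x s (a (sigf (Finset.univ \ t) (pr1 s))) (a (sigf (Finset.univ \ t) (pr2 s)))) *
               ∏ s ∈ Finset.univ \ t,
                 -(x s (a (sigf (Finset.univ \ t) (pr2 s))) (a (sigf (Finset.univ \ t) (pr1 s)))))
        have e1 : (∏ s ∈ t, x s (a (sigf (Finset.univ \ t) (pr1 s))) (a (sigf (Finset.univ \ t) (pr2 s))))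
            = ∏ s ∈ t, x s (a (pr1 s)) (a (pr2 s)) :=
          Finset.prod_congr rfl fun s hs => by rw [h1 s hs, h2 s hs]
        have e2 : (∏ s ∈ Finset.univ \ t,
              -(x s (a (sigf (Finset.univ \ t) (pr2 s))) (a (sigf (Finset.univ \ t) (pr1 s)))))
            = ∏ s ∈ Finset.univ \ t, -(x s (a (pr1 s)) (a (pr2 s))) :=
          Finset.prod_congr rfl fun s hs => by rw [h1' s hs, h2' s hs]
        have hneg : (∏ s ∈ Finset.univ \ t, -(x s (a (pr1 s)) (a (pr2 s))))
            = (-1 : ℝ) ^ (Finset.univ \ t).card * ∏ s ∈ Finset.univ \ t, x s (a (pr1 s)) (a (pr2 s)) := by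
          rw [Finset.prod_congr rfl (fun s (_ : s ∈ Finset.univ \ t) =>
            (neg_one_mul (x s (a (pr1 s)) (a (pr2 s)))).symm)]
          rw [Finset.prod_mul_distrib, Finset.prod_const]
        rw [hD, e1, e2, hneg]
        have hsplit : (∏ s ∈ Finset.univ \ t, x s (a (pr1 s)) (a (pr2 s))) *
            ∏ s ∈ t, x s (a (pr1 s)) (a (pr2 s)) = ∏ s : Fin q, x s (a (pr1 s)) (a (pr2 s)) :=
          Finset.prod_sdiff (Finset.subset_univ t)
        have hone : ((-1 : ℝ) ^ (Finset.univ \ t).card) * ((-1 : ℝ) ^ (Finset.univ \ t).card) = 1 := by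
          rw [← pow_add]
          exact Even.neg_one_pow ⟨(Finset.univ \ t).card, rfl⟩
        calc D a * ∏ s : Fin q, x s (a (pr1 s)) (a (pr2 s))
            = (((-1 : ℝ) ^ (Finset.univ \ t).card) * ((-1 : ℝ) ^ (Finset.univ \ t).card)) *
              (D a * ∏ s : Fin q, x s (a (pr1 s)) (a (pr2 s))) := by rw [hone, one_mul]
          _ = _ := by rw [← hsplit]; ring
    _ = 2 ^ q * ∑ a : Fin (2 * q) → Fin n, D a * ∏ s : Fin q, x s (a (pr1 s)) (a (pr2 s)) := by
        rw [Finset.sum_const, Finset.card_powerset, Finset.card_univ, Fintype.card_fin,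
          nsmul_eq_mul]
        push_cast
        ring

end LovelockAux

open LovelockAux

/-- for an isometric immersion `ψ : M^n → ℝ^d` and `0 < q < n/2`, the `q`-th
Lovelock tensor of the induced metric is proportional to the `2q`-th Newton
transformation: `G_{(q)} = −((2q)!/2) T_{(2q)}`.

Formalized pointwise in coordinates: `Rlow` is the fully lowered Riemann tensor of the
induced metric, related to the (symmetric, normal-valued) second fundamental form `Blow`
by the Gauss equation `R_{ijkl} = ⟨B_{ik},B_{jl}⟩ − ⟨B_{il},B_{jk}⟩`; `Rmix a b c d =
R_{ab}^{cd}` is obtained by raising the last two indices; `G` is the `q`-th Lovelock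
tensor and `T` the `2q`-th Newton transformation (via `Bm a b = B^a_b`). -/
theorem lovelock_is_newton (n q d : ℕ) (hq : 0 < q) (hqn : 2 * q < n) (hd : n < d)
    (g ginv : Matrix (Fin n) (Fin n) ℝ)
    (hgsym : ∀ i j, g i j = g j i)
    (hinv : ∀ i j, (∑ k, g i k * ginv k j) = if i = j then (1 : ℝ) else 0)
    (hinv' : ∀ i j, (∑ k, ginv i k * g k j) = if i = j then (1 : ℝ) else 0)
    (W : Type) [NormedAddCommGroup W] [InnerProductSpace ℝ W]
    (Blow : Fin n → Fin n → W)
    (hBsym : ∀ i j, Blow i j = Blow j i)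
    (Bm : Fin n → Fin n → W)
    (hBm : ∀ a b, Bm a b = ∑ c, ginv a c • Blow c b)
    (Rlow : Fin n → Fin n → Fin n → Fin n → ℝ)
    (hGauss : ∀ i j k l, Rlow i j k l = ⟪Blow i k, Blow j l⟫ - ⟪Blow i l, Blow j k⟫)
    (Rmix : Fin n → Fin n → Fin n → Fin n → ℝ)   -- Rmix a b c d = R_{ab}^{cd}
    (hRmix : ∀ a b c d, Rmix a b c d = ∑ e, ∑ f, Rlow a b e f * ginv e c * ginv f d)
    (G : Matrix (Fin n) (Fin n) ℝ)
    (hG : ∀ i j, G i j = -(1 / 2 ^ (q + 1)) * ∑ k, g i k *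
      ∑ a : Fin (2 * q) → Fin n, ∑ b : Fin (2 * q) → Fin n,
        gkd (Fin.cons k b : Fin (2 * q + 1) → Fin n) (Fin.cons j a) *
        ∏ s : Fin q, Rmix (b (pr1 s)) (b (pr2 s)) (a (pr1 s)) (a (pr2 s)))
    (T : Matrix (Fin n) (Fin n) ℝ)
    (hT : ∀ i j, T i j = (1 / ((2 * q).factorial : ℝ)) * ∑ k, g i k *
      ∑ a : Fin (2 * q) → Fin n, ∑ b : Fin (2 * q) → Fin n,
        gkd (Fin.cons k b : Fin (2 * q + 1) → Fin n) (Fin.cons j a) *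
        ∏ s : Fin q,
          ⟪Bm (a (pr1 s)) (b (pr1 s)), Bm (a (pr2 s)) (b (pr2 s))⟫) :
    ∀ i j, G i j = -(((2 * q).factorial : ℝ) / 2) * T i j := by
  classical
  intro i j
  -- symmetry of the inverse metric
  have hg1 : g * ginv = 1 := by
    ext p r; simpa [Matrix.mul_apply, Matrix.one_apply] using hinv p r
  have hgt : g.transpose = g := by
    ext p r; exact hgsym r p
  have hg3 : ginv.transpose * g = 1 := by
    have h := congrArg Matrix.transpose hg1
    rwa [Matrix.transpose_mul, hgt, Matrix.transpose_one] at h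
  have hginvsym : ∀ p r, ginv p r = ginv r p := by
    have h : ginv.transpose = ginv := by
      calc ginv.transpose = ginv.transpose * (g * ginv) := by rw [hg1, mul_one]
        _ = (ginv.transpose * g) * ginv := by rw [mul_assoc]
        _ = ginv := by rw [hg3, one_mul]
    intro p r
    conv_lhs => rw [← h]
    exact Matrix.transpose_apply ginv p r
  -- inner products of the mixed second fundamental form
  have hBinner : ∀ u v c e, (⟪Bm u c, Bm v e⟫ : ℝ)
      = ∑ p, ∑ r, ginv u p * ginv v r * ⟪Blow p c, Blow r e⟫ := by
    intro u v c e
    rw [hBm u c, hBm v e, sum_inner]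
    refine Finset.sum_congr rfl fun p _ => ?_
    rw [inner_sum]
    refine Finset.sum_congr rfl fun r _ => ?_
    rw [real_inner_smul_left, real_inner_smul_right]
    ring
  -- the Gauss equation in mixed form
  have hRm : ∀ b1 b2 a1 a2, Rmix b1 b2 a1 a2
      = (⟪Bm a1 b1, Bm a2 b2⟫ : ℝ) - ⟪Bm a2 b1, Bm a1 b2⟫ := by
    intro b1 b2 a1 a2
    rw [hRmix, hBinner, hBinner]
    rw [show (∑ e, ∑ f, Rlow b1 b2 e f * ginv e a1 * ginv f a2)
        = ∑ e, ∑ f, (ginv a1 e * ginv a2 f * (⟪Blow e b1, Blow f b2⟫ : ℝ)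
            - ginv a1 e * ginv a2 f * ⟪Blow b1 f, Blow b2 e⟫) from
      Finset.sum_congr rfl fun e _ => Finset.sum_congr rfl fun f _ => by
        rw [hGauss, hBsym b1 e, hBsym b2 f, hginvsym e a1, hginvsym f a2]; ring]
    rw [Finset.sum_congr rfl (fun e (_ : e ∈ Finset.univ) => Finset.sum_sub_distrib _ _),
      Finset.sum_sub_distrib]
    congr 1
    rw [Finset.sum_comm]
    refine Finset.sum_congr rfl fun p _ => Finset.sum_congr rfl fun r _ => ?_
    rw [hBsym b1 p, hBsym b2 r]
    ring
  -- the antisymmetry of gkd under the pair swaps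
  have hD : ∀ (k : Fin n) (b : Fin (2 * q) → Fin n) (t : Finset (Fin q))
      (a : Fin (2 * q) → Fin n),
      gkd (Fin.cons k b : Fin (2 * q + 1) → Fin n) (Fin.cons j (fun i2 => a (sigf t i2)))
        = (-1 : ℝ) ^ t.card * gkd (Fin.cons k b) (Fin.cons j a) := by
    intro k b t a
    have h1 : (Fin.cons j (fun i2 => a (sigf t i2)) : Fin (2 * q + 1) → Fin n)
        = (Fin.cons j a : Fin (2 * q + 1) → Fin n) ∘ (sigP t) := (cons_comp t j a).symm
    rw [h1, gkd_perm, sign_sigP]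
    push_cast
    ring
  -- the main combinatorial identity
  have key2 : ∀ k : Fin n,
      (∑ a : Fin (2 * q) → Fin n, ∑ b : Fin (2 * q) → Fin n,
        gkd (Fin.cons k b : Fin (2 * q + 1) → Fin n) (Fin.cons j a) *
        ∏ s : Fin q, Rmix (b (pr1 s)) (b (pr2 s)) (a (pr1 s)) (a (pr2 s)))
      = 2 ^ q * ∑ a : Fin (2 * q) → Fin n, ∑ b : Fin (2 * q) → Fin n,
        gkd (Fin.cons k b : Fin (2 * q + 1) → Fin n) (Fin.cons j a) *
        ∏ s : Fin q,
          ⟪Bm (a (pr1 s)) (b (pr1 s)), Bm (a (pr2 s)) (b (pr2 s))⟫ := by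
    intro k
    rw [Finset.sum_comm, show (∑ a : Fin (2 * q) → Fin n, ∑ b : Fin (2 * q) → Fin n,
        gkd (Fin.cons k b : Fin (2 * q + 1) → Fin n) (Fin.cons j a) *
        ∏ s : Fin q, (⟪Bm (a (pr1 s)) (b (pr1 s)), Bm (a (pr2 s)) (b (pr2 s))⟫ : ℝ))
      = ∑ b : Fin (2 * q) → Fin n, ∑ a : Fin (2 * q) → Fin n,
        gkd (Fin.cons k b : Fin (2 * q + 1) → Fin n) (Fin.cons j a) *
        ∏ s : Fin q, (⟪Bm (a (pr1 s)) (b (pr1 s)), Bm (a (pr2 s)) (b (pr2 s))⟫ : ℝ)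
      from Finset.sum_comm, Finset.mul_sum]
    refine Finset.sum_congr rfl fun b _ => ?_
    have hk := key (D := fun a => gkd (Fin.cons k b : Fin (2 * q + 1) → Fin n) (Fin.cons j a))
        (x := fun s u v => (⟪Bm u (b (pr1 s)), Bm v (b (pr2 s))⟫ : ℝ)) (hD k b)
    refine Eq.trans (Finset.sum_congr rfl fun a _ => ?_) hk
    exact congrArg (gkd (Fin.cons k b : Fin (2 * q + 1) → Fin n) (Fin.cons j a) * ·)
      (Finset.prod_congr rfl fun s _ =>
        hRm (b (pr1 s)) (b (pr2 s)) (a (pr1 s)) (a (pr2 s)))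
  -- conclude
  rw [hG i j, hT i j]
  have e2 : (∑ k, g i k *
      ∑ a : Fin (2 * q) → Fin n, ∑ b : Fin (2 * q) → Fin n,
        gkd (Fin.cons k b : Fin (2 * q + 1) → Fin n) (Fin.cons j a) *
        ∏ s : Fin q, Rmix (b (pr1 s)) (b (pr2 s)) (a (pr1 s)) (a (pr2 s)))
      = 2 ^ q * ∑ k, g i k *
      ∑ a : Fin (2 * q) → Fin n, ∑ b : Fin (2 * q) → Fin n,
        gkd (Fin.cons k b : Fin (2 * q + 1) → Fin n) (Fin.cons j a) *
        ∏ s : Fin q,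
          ⟪Bm (a (pr1 s)) (b (pr1 s)), Bm (a (pr2 s)) (b (pr2 s))⟫ := by
    rw [Finset.mul_sum]
    refine Finset.sum_congr rfl fun k _ => ?_
    rw [key2 k]; ring
  rw [e2]
  have hfac : ((2 * q).factorial : ℝ) ≠ 0 := Nat.cast_ne_zero.mpr (Nat.factorial_ne_zero _)
  have h2q : (2 : ℝ) ^ q ≠ 0 := pow_ne_zero _ two_ne_zero
  rw [pow_succ]
  field_simp
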